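/- Each stratified resource-bisimilarity relation ≃ᵢ is a congruence on markings ℕ^P. -/
import Mathlib


/-- A labeled Petri net: places `P`, transitions `T`, action labels `Act`. -/
structure LPN (P T Act : Type) where
  pre : T → P → ℕ
  post : T → P → ℕ
  lab : T → Act

variable {P T Act : Type}

/-- Firing relation: `M` fires `t` yielding `M'`. -/
def Fires (N : LPN P T Act) (M : P → ℕ) (t : T) (M' : P → ℕ) : Prop :=
  N.pre t ≤ M ∧ M' = fun p => M p - N.pre t p + N.post t p

/-- `R` satisfies the (ordinary) transfer property w.r.t. `R'`. -/
def Transfer (N : LPN P T Act) (R R' : (P → ℕ) → (P → ℕ) → Prop) : Prop :=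
  ∀ M₁ M₂, R M₁ M₂ → ∀ t M₁', Fires N M₁ t M₁' →
    ∃ u M₂', N.lab u = N.lab t ∧ Fires N M₂ u M₂' ∧ R' M₁' M₂'

/-- `R` is a bisimulation. -/
def IsBisim (N : LPN P T Act) (R : (P → ℕ) → (P → ℕ) → Prop) : Prop :=
  Transfer N R R ∧ Transfer N (fun a b => R b a) (fun a b => R b a)

/-- Bisimilarity `∼`. -/
def Bisim (N : LPN P T Act) (M₁ M₂ : P → ℕ) : Prop :=
  ∃ R, IsBisim N R ∧ R M₁ M₂

/-- A congruence on markings: an equivalence compatible with addition. -/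
def IsCongruence (ρ : (P → ℕ) → (P → ℕ) → Prop) : Prop :=
  Equivalence ρ ∧ ∀ r₁ r₂ s, ρ r₁ r₂ → ρ (r₁ + s) (r₂ + s)

/-- Resource similarity `≈`. -/
def ResSim (N : LPN P T Act) (r s : P → ℕ) : Prop :=
  ∀ w, Bisim N (r + w) (s + w)

/-- `R` satisfies the resource transfer property w.r.t. `R'`. -/
def ResTransfer (N : LPN P T Act) (R R' : (P → ℕ) → (P → ℕ) → Prop) : Prop :=
  ∀ r s, R r s → ∀ t r', Fires N (fun p => r p + (N.pre t p - r p)) t r' →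
    ∃ u s', N.lab u = N.lab t ∧
      Fires N (fun p => s p + (N.pre t p - r p)) u s' ∧ R' r' s'

/-- `R` is a resource bisimulation. -/
def IsResBisim (N : LPN P T Act) (R : (P → ℕ) → (P → ℕ) → Prop) : Prop :=
  ResTransfer N R R ∧ ResTransfer N (fun a b => R b a) (fun a b => R b a)

/-- Resource bisimilarity `≃`. -/
def ResBisim (N : LPN P T Act) (r s : P → ℕ) : Prop :=
  ∃ R, IsResBisim N R ∧ R r s

/-- Stratified bisimilarity `∼ᵢ`. -/
def Strat (N : LPN P T Act) : ℕ → (P → ℕ) → (P → ℕ) → Prop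
  | 0, _, _ => True
  | i + 1, M₁, M₂ =>
      (∀ t M₁', Fires N M₁ t M₁' →
        ∃ u M₂', N.lab u = N.lab t ∧ Fires N M₂ u M₂' ∧ Strat N i M₁' M₂') ∧
      (∀ t M₂', Fires N M₂ t M₂' →
        ∃ u M₁', N.lab u = N.lab t ∧ Fires N M₁ u M₁' ∧ Strat N i M₂' M₁')

/-- Stratified resource bisimilarity `≃ᵢ`. -/
def StratRes (N : LPN P T Act) : ℕ → (P → ℕ) → (P → ℕ) → Prop
  | 0, _, _ => True
  | i + 1, r, s =>
      (∀ t r', Fires N (fun p => r p + (N.pre t p - r p)) t r' →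
        ∃ u s', N.lab u = N.lab t ∧
          Fires N (fun p => s p + (N.pre t p - r p)) u s' ∧ StratRes N i r' s') ∧
      (∀ t s', Fires N (fun p => s p + (N.pre t p - s p)) t s' →
        ∃ u r', N.lab u = N.lab t ∧
          Fires N (fun p => r p + (N.pre t p - s p)) u r' ∧ StratRes N i s' r')

/-- The equivalence level: the largest `i` with `r ≃ᵢ s` (`⊤` = ω if all `i`). -/
noncomputable def eqlev (N : LPN P T Act) (r s : P → ℕ) : ℕ∞ :=
  sSup {n : ℕ∞ | ∃ i : ℕ, n = (i : ℕ∞) ∧ StratRes N i r s}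

/-- One directional clause of `StratRes (i+1)`. -/
def Fwd (N : LPN P T Act) (i : ℕ) (r s : P → ℕ) : Prop :=
  ∀ t r', Fires N (fun p => r p + (N.pre t p - r p)) t r' →
    ∃ u s', N.lab u = N.lab t ∧
      Fires N (fun p => s p + (N.pre t p - r p)) u s' ∧ StratRes N i r' s'

lemma stratRes_succ (N : LPN P T Act) (i : ℕ) (r s : P → ℕ) :
    StratRes N (i + 1) r s ↔ Fwd N i r s ∧ Fwd N i s r := Iff.rfl

lemma fwd_add (N : LPN P T Act) (i : ℕ)
    (IH : ∀ a b w, StratRes N i a b → StratRes N i (a + w) (b + w))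
    (r s w : P → ℕ) (h : Fwd N i r s) : Fwd N i (r + w) (s + w) := by
  intro t r' hf
  obtain ⟨_, hr'⟩ := hf
  obtain ⟨u, s₀', hlab, ⟨hus, hs₀'⟩, hrel⟩ :=
    h t (fun p => r p + (N.pre t p - r p) - N.pre t p + N.post t p)
      ⟨fun p => by change N.pre t p ≤ r p + (N.pre t p - r p); omega, rfl⟩
  set e : P → ℕ := fun p => (w p + (N.pre t p - (r + w) p)) - (N.pre t p - r p) with he
  refine ⟨u, _, hlab, ⟨fun p => ?_, rfl⟩, ?_⟩
  · have := hus p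
    simp only [Pi.add_apply] at *
    omega
  · have h1 : r' = (fun p => r p + (N.pre t p - r p) - N.pre t p + N.post t p) + e := by
      funext p
      simp only [hr', he, Pi.add_apply]
      omega
    have h2 : (fun p => (s + w) p + (N.pre t p - (r + w) p) - N.pre u p + N.post u p)
        = s₀' + e := by
      funext p
      have := hus p
      simp only [hs₀', he, Pi.add_apply] at *
      omega
    rw [h1, h2]
    exact IH _ _ _ hrel

lemma stratRes_add (N : LPN P T Act) (i : ℕ) :
    ∀ r s w, StratRes N i r s → StratRes N i (r + w) (s + w) := by
  induction i with
  | zero => intro _ _ _ _; trivial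
  | succ i IH =>
    intro r s w h
    rw [stratRes_succ] at h ⊢
    exact ⟨fwd_add N i IH r s w h.1, fwd_add N i IH s r w h.2⟩

lemma stratRes_refl (N : LPN P T Act) (i : ℕ) : ∀ r, StratRes N i r r := by
  induction i with
  | zero => intro _; trivial
  | succ i IH =>
    intro r
    exact ⟨fun t r' h => ⟨t, r', rfl, h, IH r'⟩, fun t r' h => ⟨t, r', rfl, h, IH r'⟩⟩

lemma stratRes_symm (N : LPN P T Act) (i : ℕ) {r s : P → ℕ}
    (h : StratRes N i r s) : StratRes N i s r := by
  cases i with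
  | zero => trivial
  | succ i =>
    rw [stratRes_succ] at h ⊢
    exact ⟨h.2, h.1⟩

lemma fwd_trans (N : LPN P T Act) (i : ℕ)
    (IH : ∀ {a b c}, StratRes N i a b → StratRes N i b c → StratRes N i a c)
    {r s q : P → ℕ} (h1 : Fwd N i r s) (h2 : StratRes N (i + 1) s q) :
    Fwd N i r q := by
  intro t r' hf
  obtain ⟨u, s', hlab, hfs, hrel⟩ := h1 t r' hf
  set d : P → ℕ := fun p => N.pre t p - r p with hd
  have h2' := (stratRes_succ N i _ _).mp (stratRes_add N (i + 1) s q d h2)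
  have hkey : (fun p => (s + d) p + (N.pre u p - (s + d) p)) = fun p => s p + d p := by
    funext p
    have := hfs.1 p
    simp only [hd, Pi.add_apply] at *
    omega
  obtain ⟨v, q', hlabv, hfq, hrel2⟩ := h2'.1 u s' (by rw [hkey]; exact hfs)
  have hkey2 : (fun p => (q + d) p + (N.pre u p - (s + d) p)) = fun p => q p + d p := by
    funext p
    have := hfs.1 p
    simp only [hd, Pi.add_apply] at *
    omega
  rw [hkey2] at hfq
  exact ⟨v, q', hlabv.trans hlab, hfq, IH hrel hrel2⟩

lemma stratRes_trans (N : LPN P T Act) (i : ℕ) :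
    ∀ {r s q : P → ℕ}, StratRes N i r s → StratRes N i s q → StratRes N i r q := by
  induction i with
  | zero => intros; trivial
  | succ i IH =>
    intro r s q h1 h2
    rw [stratRes_succ] at h1 ⊢
    have h2s := stratRes_symm N (i + 1) h2
    have h1s := stratRes_symm N (i + 1) ((stratRes_succ N i r s).mpr h1)
    exact ⟨fwd_trans N i IH h1.1 h2,
      fwd_trans N i IH ((stratRes_succ N i q s).mp h2s).1 h1s⟩

/-- Each stratified resource-bisimilarity relation `≃ᵢ` is a congruence on markings. -/
theorem stratRes_congruence (N : LPN P T Act) (i : ℕ) :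
    IsCongruence (StratRes N i) :=
  ⟨⟨stratRes_refl N i, stratRes_symm N i, stratRes_trans N i⟩,
    fun r₁ r₂ s h => stratRes_add N i r₁ r₂ s h⟩
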